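/- Let h(z) := (4π)^{-1/2} ∫₀^∞ e^{-(z-w)²/4} dw. Then the function z ↦ h(z)/h'(z) is convex on ℝ; equivalently, (log h)' is (-1)-concave on ℝ. -/

import Mathlib

open Set Filter MeasureTheory
open scoped Topology

noncomputable section

/-- `h(z) = (4π)^{-1/2} ∫₀^∞ e^{-(z-w)²/4} dw`. -/
def hfun (z : ℝ) : ℝ :=
  (4 * Real.pi) ^ (-(1:ℝ)/2) * ∫ w in Ioi (0:ℝ), Real.exp (-(z - w)^2 / 4)

def gexp (u : ℝ) : ℝ := Real.exp (-u^2/4)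

def Gfun (z : ℝ) : ℝ := ∫ u in Iic z, gexp u

lemma gexp_pos (u : ℝ) : 0 < gexp u := Real.exp_pos _

lemma gexp_cont : Continuous gexp := by unfold gexp; continuity

lemma gexp_integrable : Integrable gexp := by
  have : gexp = fun u => Real.exp (-(1/4 : ℝ) * u^2) := by
    funext u; unfold gexp; ring_nf
  rw [this]
  exact integrable_exp_neg_mul_sq (by norm_num)

lemma gexp_hasDerivAt (z : ℝ) : HasDerivAt gexp (-(z/2) * gexp z) z := by
  have h1 : HasDerivAt (fun z : ℝ => -z^2/4) (-(z/2)) z := by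
    have := ((hasDerivAt_pow 2 z).neg).div_const 4
    exact this.congr_deriv (by push_cast; ring)
  have := (Real.hasDerivAt_exp (-z^2/4)).comp z h1
  exact this.congr_deriv (by simp [gexp, mul_comm])

lemma Gfun_sub (a b : ℝ) : Gfun b - Gfun a = ∫ u in a..b, gexp u :=
  intervalIntegral.integral_Iic_sub_Iic gexp_integrable.integrableOn gexp_integrable.integrableOn

lemma Gfun_hasDerivAt (z : ℝ) : HasDerivAt Gfun (gexp z) z := by
  have h : HasDerivAt (fun u => ∫ x in (0:ℝ)..u, gexp x) (gexp z) z :=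
    intervalIntegral.integral_hasDerivAt_right
      (gexp_integrable.intervalIntegrable)
      gexp_cont.stronglyMeasurable.stronglyMeasurableAtFilter
      gexp_cont.continuousAt
  have : Gfun = fun u => Gfun 0 + ∫ x in (0:ℝ)..u, gexp x := by
    funext u; rw [← Gfun_sub 0 u]; ring
  rw [this]
  simpa using (h.const_add (Gfun 0))

lemma Gfun_nonneg (z : ℝ) : 0 ≤ Gfun z :=
  setIntegral_nonneg measurableSet_Iic (fun u _ => (gexp_pos u).le)

lemma Gfun_le_exp {z : ℝ} (hz : z ≤ -4) : Gfun z ≤ Real.exp z := by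
  rw [← integral_exp_Iic z]
  apply setIntegral_mono_on gexp_integrable.integrableOn (integrableOn_exp_Iic z)
    measurableSet_Iic
  intro u hu
  have hu4 : u ≤ -4 := le_trans hu hz
  apply Real.exp_le_exp.2
  nlinarith

lemma gexp_le_exp {z : ℝ} (hz : z ≤ -4) : gexp z ≤ Real.exp z := by
  apply Real.exp_le_exp.2; nlinarith

def cg : ℝ := (4 * Real.pi) ^ (-(1:ℝ)/2)

lemma cg_pos : 0 < cg := Real.rpow_pos_of_pos (by positivity) _

lemma hfun_eq (z : ℝ) : hfun z = cg * Gfun z := by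
  unfold hfun cg Gfun
  congr 1
  have h1 : (∫ w in Ioi (0:ℝ), Real.exp (-(z - w)^2 / 4))
      = ∫ w in Ioi (0:ℝ), (fun u => gexp (z + u)) (-w) := by
    apply setIntegral_congr_fun measurableSet_Ioi
    intro w _
    simp only [gexp]
    ring_nf
  rw [h1, integral_comp_neg_Ioi 0 (fun u => gexp (z + u)), neg_zero]
  have A : MeasurableEmbedding (fun u : ℝ => z + u) :=
    (Homeomorph.addLeft z).isClosedEmbedding.measurableEmbedding
  have := A.setIntegral_map (μ := volume) gexp (Iic z)
  rw [map_add_left_eq_self (μ := (volume : Measure ℝ)) z] at this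
  have hset : (fun u : ℝ => z + u) ⁻¹' Iic z = Iic 0 := by
    ext u; simp
  rw [hset] at this
  exact this.symm

lemma hfun_hasDerivAt (z : ℝ) : HasDerivAt hfun (cg * gexp z) z := by
  have : hfun = fun z => cg * Gfun z := funext hfun_eq
  rw [this]
  exact (Gfun_hasDerivAt z).const_mul cg

lemma deriv_hfun (z : ℝ) : deriv hfun z = cg * gexp z := (hfun_hasDerivAt z).deriv

/-- the ratio function -/
def Ffun (z : ℝ) : ℝ := Gfun z * Real.exp (z^2/4)

lemma ratio_eq (z : ℝ) : hfun z / deriv hfun z = Ffun z := by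
  rw [deriv_hfun, hfun_eq, mul_div_mul_left _ _ (ne_of_gt cg_pos)]
  unfold Ffun gexp
  rw [div_eq_iff (Real.exp_ne_zero _), mul_assoc, ← Real.exp_add,
    show z^2/4 + -z^2/4 = 0 by ring, Real.exp_zero, mul_one]

lemma exp_sq_hasDerivAt (z : ℝ) :
    HasDerivAt (fun z : ℝ => Real.exp (z^2/4)) (z/2 * Real.exp (z^2/4)) z := by
  have h1 : HasDerivAt (fun z : ℝ => z^2/4) (z/2) z := by
    have := (hasDerivAt_pow 2 z).div_const 4
    exact this.congr_deriv (by push_cast; ring)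
  have := (Real.hasDerivAt_exp (z^2/4)).comp z h1
  exact this.congr_deriv (by simp [mul_comm])

lemma Ffun_hasDerivAt (z : ℝ) : HasDerivAt Ffun (z/2 * Ffun z + 1) z := by
  have h := (Gfun_hasDerivAt z).mul (exp_sq_hasDerivAt z)
  have he : gexp z * Real.exp (z^2/4) = 1 := by
    rw [gexp, ← Real.exp_add, show -z^2/4 + z^2/4 = 0 by ring, Real.exp_zero]
  refine h.congr_deriv ?_
  unfold Ffun
  rw [← he]; ring

def F1 (z : ℝ) : ℝ := z/2 * Ffun z + 1

lemma F1_hasDerivAt (z : ℝ) :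
    HasDerivAt F1 (1/2 * Ffun z + z/2 * F1 z) z := by
  have h := (((hasDerivAt_id z).div_const 2).mul (Ffun_hasDerivAt z)).add_const 1
  convert h using 1 <;> rfl

def ψ (z : ℝ) : ℝ := Gfun z + 2*z*gexp z/(2+z^2)

lemma ψ_hasDerivAt (z : ℝ) : HasDerivAt ψ (8 * gexp z / (2+z^2)^2) z := by
  have h2 : (2 + z^2) ≠ 0 := by positivity
  have hn : HasDerivAt (fun z : ℝ => 2*z*gexp z)
      (2 * gexp z + 2*z*(-(z/2) * gexp z)) z := by
    have := (((hasDerivAt_id z).const_mul 2)).mul (gexp_hasDerivAt z)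
    simp only [id_eq, mul_one] at this
    exact this
  have hd : HasDerivAt (fun z : ℝ => 2 + z^2) (2*z) z := by
    have := (hasDerivAt_pow 2 z).const_add 2
    exact this.congr_deriv (by push_cast; ring)
  have h := (Gfun_hasDerivAt z).add (hn.div hd h2)
  refine h.congr_deriv ?_
  field_simp
  ring

lemma ψ_strictMono : StrictMono ψ := by
  apply strictMono_of_deriv_pos
  intro x
  rw [(ψ_hasDerivAt x).deriv]
  have := gexp_pos x
  positivity

lemma term_bounds (z : ℝ) :
    -gexp z ≤ 2*z*gexp z/(2+z^2) ∧ 2*z*gexp z/(2+z^2) ≤ gexp z := by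
  have h2 : (0:ℝ) < 2 + z^2 := by positivity
  constructor
  · rw [le_div_iff₀ h2]
    nlinarith [gexp_pos z, sq_nonneg (z+1), (gexp_pos z).le]
  · rw [div_le_iff₀ h2]
    nlinarith [gexp_pos z, sq_nonneg (z-1), (gexp_pos z).le]

lemma ψ_tendsto : Tendsto ψ atBot (𝓝 0) := by
  have hlo : ∀ᶠ z in atBot, -Real.exp z ≤ ψ z := by
    filter_upwards [eventually_le_atBot (-4:ℝ)] with z hz
    have h1 := (term_bounds z).1
    have h2 := gexp_le_exp hz
    have h3 := Gfun_nonneg z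
    unfold ψ
    linarith
  have hhi : ∀ᶠ z in atBot, ψ z ≤ 2 * Real.exp z := by
    filter_upwards [eventually_le_atBot (-4:ℝ)] with z hz
    have h1 := (term_bounds z).2
    have h2 := gexp_le_exp hz
    have h3 := Gfun_le_exp hz
    unfold ψ
    linarith
  have e1 : Tendsto (fun z : ℝ => -Real.exp z) atBot (𝓝 0) := by
    simpa using (Real.tendsto_exp_atBot).neg
  have e2 : Tendsto (fun z : ℝ => 2 * Real.exp z) atBot (𝓝 0) := by
    simpa using (Real.tendsto_exp_atBot).const_mul 2
  exact tendsto_of_tendsto_of_tendsto_of_le_of_le' e1 e2 hlo hhi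

lemma ψ_nonneg (z : ℝ) : 0 ≤ ψ z := by
  apply le_of_tendsto ψ_tendsto
  filter_upwards [eventually_le_atBot z] with y hy
  exact (ψ_strictMono.monotone hy)

lemma key_ineq (z : ℝ) : 0 ≤ (2+z^2) * Gfun z + 2*z*gexp z := by
  have h2 : (0:ℝ) < 2 + z^2 := by positivity
  have h : (2+z^2) * ψ z = (2+z^2) * Gfun z + 2*z*gexp z := by
    unfold ψ
    field_simp
  rw [← h]
  exact mul_nonneg h2.le (ψ_nonneg z)

lemma F2_nonneg (z : ℝ) : 0 ≤ 1/2 * Ffun z + z/2 * F1 z := by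
  have hE : (0:ℝ) < Real.exp (z^2/4) := Real.exp_pos _
  have hprod : gexp z * Real.exp (z^2/4) = 1 := by
    rw [gexp, ← Real.exp_add, show -z^2/4 + z^2/4 = 0 by ring, Real.exp_zero]
  have key := key_ineq z
  have h4 : (0:ℝ) ≤ Real.exp (z^2/4)/4 * ((2+z^2) * Gfun z + 2*z*gexp z) :=
    mul_nonneg (by positivity) key
  have heq : 1/2 * (Gfun z * Real.exp (z^2/4)) + z/2 * (z/2 * (Gfun z * Real.exp (z^2/4)) + 1)
      = Real.exp (z^2/4)/4 * ((2+z^2) * Gfun z + 2*z*gexp z) := by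
    linear_combination (-(z/2)) * hprod
  unfold F1 Ffun
  rw [heq]
  exact h4

/-- the function `z ↦ h(z)/h'(z)` is convex on `ℝ`; equivalently,
`(log h)' = h'/h` is `(-1)`-concave on `ℝ`. -/
theorem stmt17 :
    ConvexOn ℝ (univ : Set ℝ) (fun z => hfun z / deriv hfun z) := by
  have hfe : (fun z => hfun z / deriv hfun z) = Ffun := funext ratio_eq
  rw [hfe]
  have hdiff : Differentiable ℝ Ffun := fun z => (Ffun_hasDerivAt z).differentiableAt
  have hderiv : deriv Ffun = F1 := funext fun z => (Ffun_hasDerivAt z).deriv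
  apply convexOn_of_deriv2_nonneg convex_univ hdiff.continuous.continuousOn
    hdiff.differentiableOn
  · rw [hderiv]
    exact Differentiable.differentiableOn (fun z => (F1_hasDerivAt z).differentiableAt)
  · intro x _
    have : deriv^[2] Ffun x = deriv (deriv Ffun) x := rfl
    rw [this, hderiv, (F1_hasDerivAt x).deriv]
    exact F2_nonneg x
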